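/- arXiv:1805.01329 — 2 statements merged into one kernel-verified Lean document; each statement's English description precedes it below -/
import Mathlib

section
/- Let D be a dissimilarity and f: ℕ → ℝ≥0 a function. The Colless-like index 𝔠_{D,f} is sound if and only if δ_f(T₁) ≠ δ_f(T₂) for every pair of non-isomorphic fully symmetric trees T₁, T₂. -/
/-- Rooted trees encoded as a root together with the list of subtrees
rooted at its children. -/
inductive MTree : Type
  | node : List MTree → MTree

namespace MTree

/-- Number of leaves of a tree (a single node counts as one leaf). -/
def leafCount : MTree → ℕ
  | node ts => max 1 (ts.attach.map (fun x => leafCount x.1)).sum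
decreasing_by
  have := List.sizeOf_lt_of_mem x.2
  simp only [node.sizeOf_spec]; omega

/-- `deltaF f T = Σ_{v ∈ V(T)} f (deg v)`, the `f`-size of `T`. -/
noncomputable def deltaF (f : ℕ → ℝ) : MTree → ℝ
  | node ts => f ts.length + (ts.attach.map (fun x => deltaF f x.1)).sum
decreasing_by
  have := List.sizeOf_lt_of_mem x.2
  simp only [node.sizeOf_spec]; omega

/-- The Colless-like index relative to a "dissimilarity" `D` and a function `f`:
the sum, over all internal nodes `v`, of `D` applied to the list of `f`-sizes of
the subtrees rooted at the children of `v`. -/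
noncomputable def cIndex (D : List ℝ → ℝ) (f : ℕ → ℝ) : MTree → ℝ
  | node ts => (if ts.isEmpty then 0 else D (ts.map (deltaF f)))
      + (ts.attach.map (fun x => cIndex D f x.1)).sum
decreasing_by
  have := List.sizeOf_lt_of_mem x.2
  simp only [node.sizeOf_spec]; omega

/-- The Colless index of a (bifurcating) tree: the sum over the internal nodes of the
absolute value of the difference of the numbers of leaves of the two child subtrees. -/
def colless : MTree → ℕ
  | node ts =>
      (match ts with
       | [a, b] => ((a.leafCount : ℤ) - (b.leafCount : ℤ)).natAbs
       | _ => 0)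
      + (ts.attach.map (fun x => colless x.1)).sum
decreasing_by
  have := List.sizeOf_lt_of_mem x.2
  simp only [node.sizeOf_spec]; omega

/-- The quadratic Colless index of a (bifurcating) tree. -/
def collessSq : MTree → ℕ
  | node ts =>
      (match ts with
       | [a, b] => ((a.leafCount : ℤ) - (b.leafCount : ℤ)).natAbs ^ 2
       | _ => 0)
      + (ts.attach.map (fun x => collessSq x.1)).sum
decreasing_by
  have := List.sizeOf_lt_of_mem x.2
  simp only [node.sizeOf_spec]; omega

/-- A tree in the sense of the paper: no node of out-degree 1. -/
inductive WellFormed : MTree → Prop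
  | node {ts : List MTree} : ts.length ≠ 1 → (∀ t ∈ ts, WellFormed t) →
      WellFormed (node ts)

/-- A bifurcating tree: every internal node has out-degree exactly 2. -/
inductive Bifurcating : MTree → Prop
  | node {ts : List MTree} : (ts.length = 0 ∨ ts.length = 2) →
      (∀ t ∈ ts, Bifurcating t) → Bifurcating (node ts)

/-- Isomorphism of (list-encoded) trees: the lists of child subtrees match up to
a permutation and recursively isomorphic subtrees. -/
inductive Iso : MTree → MTree → Prop
  | node {ts us vs : List MTree} :
      List.Forall₂ Iso ts vs → vs.Perm us → Iso (node ts) (node us)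

/-- A tree is fully symmetric when, for every internal node, the subtrees rooted at
its children are pairwise isomorphic. -/
inductive FullySymmetric : MTree → Prop
  | node {ts : List MTree} : (∀ s ∈ ts, ∀ t ∈ ts, Iso s t) →
      (∀ t ∈ ts, FullySymmetric t) → FullySymmetric (node ts)

/-- The comb `K_n` with `n ≥ 1` leaves. -/
def comb : ℕ → MTree
  | 0 => node []
  | 1 => node []
  | n + 2 => node [node [], comb (n + 1)]

/-- The star `FS_n`, whose root has `n` children, all of them leaves. -/
def star (n : ℕ) : MTree := node (List.replicate n (node []))

/-- The median of a list of real numbers. -/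
noncomputable def median (l : List ℝ) : ℝ :=
  let s := l.mergeSort (fun a b => a ≤ b)
  if l.length % 2 = 1 then s.getD (l.length / 2) 0
  else (s.getD (l.length / 2 - 1) 0 + s.getD (l.length / 2) 0) / 2

/-- The mean deviation from the median of a list of real numbers. -/
noncomputable def MDM (l : List ℝ) : ℝ :=
  (l.map (fun x => |x - median l|)).sum / l.length

/-- The sample variance of a list of real numbers. -/
noncomputable def svar (l : List ℝ) : ℝ :=
  (l.map (fun x => (x - l.sum / l.length) ^ 2)).sum / ((l.length : ℝ) - 1)

/-- The sample standard deviation of a list of real numbers. -/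
noncomputable def ssd (l : List ℝ) : ℝ := Real.sqrt (svar l)

end MTree

/-- A dissimilarity: a permutation-invariant nonnegative function on nonempty finite
tuples of reals which vanishes exactly on constant tuples. -/
structure Dissimilarity where
  toFun : List ℝ → ℝ
  nonneg : ∀ l : List ℝ, 0 ≤ toFun l
  perm_invariant : ∀ {l l' : List ℝ}, l.Perm l' → toFun l = toFun l'
  eq_zero_iff : ∀ l : List ℝ, l ≠ [] → (toFun l = 0 ↔ ∀ x ∈ l, ∀ y ∈ l, x = y)

namespace MTree

theorem strongInd (P : MTree → Prop)
    (h : ∀ ts : List MTree, (∀ t ∈ ts, P t) → P (node ts)) : ∀ t, P t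
  | node ts => h ts (fun t ht => strongInd P h t)
decreasing_by
  have := List.sizeOf_lt_of_mem ht
  simp only [node.sizeOf_spec]; omega

theorem deltaF_node (f : ℕ → ℝ) (ts : List MTree) :
    deltaF f (node ts) = f ts.length + (ts.map (deltaF f)).sum := by
  rw [deltaF]
  congr 1
  rw [List.attach_map_val (l := ts) (f := deltaF f)]

theorem cIndex_node (D : List ℝ → ℝ) (f : ℕ → ℝ) (ts : List MTree) :
    cIndex D f (node ts) = (if ts.isEmpty then 0 else D (ts.map (deltaF f)))
      + (ts.map (cIndex D f)).sum := by
  rw [cIndex]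
  congr 1
  rw [List.attach_map_val (l := ts) (f := cIndex D f)]

end MTree
namespace MTree

theorem iso_deltaF (f : ℕ → ℝ) : ∀ t u : MTree, Iso t u → deltaF f t = deltaF f u := by
  refine strongInd (fun t => ∀ u, Iso t u → deltaF f t = deltaF f u) ?_
  intro ts ih u hiso
  cases hiso with
  | @node _ us vs h₂ hperm =>
    rw [deltaF_node, deltaF_node]
    have hmap : ts.map (deltaF f) = vs.map (deltaF f) := by
      clear hperm
      induction h₂ with
      | nil => rfl
      | cons h _ ih2 =>
        simp only [List.map_cons]
        rw [ih _ List.mem_cons_self _ h,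
          ih2 (fun t ht => ih t (List.mem_cons_of_mem _ ht))]
    have hperm' : (vs.map (deltaF f)).Perm (us.map (deltaF f)) := hperm.map _
    rw [hmap, h₂.length_eq, hperm.length_eq, hperm'.sum_eq]

theorem cIndex_nonneg (D : Dissimilarity) (f : ℕ → ℝ) :
    ∀ t : MTree, 0 ≤ cIndex D.toFun f t := by
  refine strongInd _ ?_
  intro ts ih
  rw [cIndex_node]
  refine add_nonneg ?_ (List.sum_nonneg ?_)
  · split
    · exact le_rfl
    · exact D.nonneg _
  · intro x hx
    obtain ⟨t, ht, rfl⟩ := List.mem_map.mp hx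
    exact ih t ht

theorem fs_cIndex_zero (D : Dissimilarity) (f : ℕ → ℝ) :
    ∀ t : MTree, FullySymmetric t → cIndex D.toFun f t = 0 := by
  refine strongInd _ ?_
  intro ts ih hfs
  cases hfs with
  | node hpair hfs' =>
    rw [cIndex_node]
    have h1 : (ts.map (cIndex D.toFun f)).sum = 0 := by
      apply List.sum_eq_zero
      intro x hx
      obtain ⟨t, ht, rfl⟩ := List.mem_map.mp hx
      exact ih t ht (hfs' t ht)
    rw [h1, add_zero]
    by_cases he : ts.isEmpty
    · simp [he]
    · rw [if_neg he]
      apply (D.eq_zero_iff _ (by simpa [List.isEmpty_iff] using he)).mpr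
      intro x hx y hy
      obtain ⟨s, hs, rfl⟩ := List.mem_map.mp hx
      obtain ⟨t, ht, rfl⟩ := List.mem_map.mp hy
      exact iso_deltaF f s t (hpair s hs t ht)

end MTree
/-- `𝔠_{D,f}` is sound (i.e. it vanishes exactly on the fully symmetric trees) if and
only if `δ_f` distinguishes non-isomorphic fully symmetric trees. -/
theorem sound_iff_deltaF_injective_on_fullySymmetric
    (D : Dissimilarity) (f : ℕ → ℝ) (hf : ∀ n, 0 ≤ f n) :
    (∀ T : MTree, T.WellFormed →
        (MTree.cIndex D.toFun f T = 0 ↔ T.FullySymmetric)) ↔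
    (∀ T₁ T₂ : MTree, T₁.WellFormed → T₂.WellFormed →
        T₁.FullySymmetric → T₂.FullySymmetric → ¬ T₁.Iso T₂ →
        MTree.deltaF f T₁ ≠ MTree.deltaF f T₂) := by
  open MTree in
  constructor
  · intro hsound T₁ T₂ hw1 hw2 hfs1 hfs2 hniso heq
    have hw : WellFormed (node [T₁, T₂]) := by
      refine WellFormed.node (by simp) ?_
      intro t ht
      simp only [List.mem_cons, List.mem_singleton, List.not_mem_nil, or_false] at ht
      rcases ht with rfl | rfl
      · exact hw1
      · exact hw2
    have hD : D.toFun [deltaF f T₁, deltaF f T₂] = 0 := by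
      refine (D.eq_zero_iff _ (by simp)).mpr ?_
      intro x hx y hy
      simp only [List.mem_cons, List.mem_singleton, List.not_mem_nil, or_false] at hx hy
      rcases hx with rfl | rfl <;> rcases hy with rfl | rfl <;> simp [heq]
    have hzero : cIndex D.toFun f (node [T₁, T₂]) = 0 := by
      rw [cIndex_node]
      simp only [List.map_cons, List.map_nil, List.isEmpty_cons, if_false,
        fs_cIndex_zero D f T₁ hfs1, fs_cIndex_zero D f T₂ hfs2, hD]
      norm_num
    have hfs := (hsound _ hw).mp hzero
    cases hfs with
    | node hpair _ => exact hniso (hpair T₁ (by simp) T₂ (by simp))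
  · intro hinj T
    refine strongInd (fun T => T.WellFormed →
      (cIndex D.toFun f T = 0 ↔ T.FullySymmetric)) ?_ T
    intro ts ih hw
    cases hw with
    | node hlen hwts =>
    constructor
    · intro hz
      rw [cIndex_node] at hz
      set r := (if ts.isEmpty then (0:ℝ) else D.toFun (ts.map (deltaF f))) with hr
      have hr0 : 0 ≤ r := by
        rw [hr]; split
        · exact le_rfl
        · exact D.nonneg _
      have hels : ∀ x ∈ ts.map (cIndex D.toFun f), 0 ≤ x := by
        intro x hx
        obtain ⟨t, ht, rfl⟩ := List.mem_map.mp hx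
        exact cIndex_nonneg D f t
      have hsum0 : 0 ≤ (ts.map (cIndex D.toFun f)).sum := List.sum_nonneg hels
      have hrz : r = 0 := by linarith
      have hsumz : (ts.map (cIndex D.toFun f)).sum = 0 := by linarith
      have hchild : ∀ t ∈ ts, cIndex D.toFun f t = 0 := by
        intro t ht
        have h1 := List.single_le_sum hels _ (List.mem_map_of_mem ht)
        have h2 := cIndex_nonneg D f t
        linarith [hsumz ▸ h1]
      have hfsts : ∀ t ∈ ts, FullySymmetric t :=
        fun t ht => (ih t ht (hwts t ht)).mp (hchild t ht)
      refine FullySymmetric.node ?_ hfsts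
      intro s hs t ht
      by_cases he : ts.isEmpty
      · rw [List.isEmpty_iff] at he
        subst he
        simp at hs
      · rw [hr, if_neg he] at hrz
        have hall := (D.eq_zero_iff _ (by
          intro hcon
          exact he (by simpa [List.isEmpty_iff, List.map_eq_nil_iff] using hcon))).mp hrz
        by_contra hniso
        exact hinj s t (hwts s hs) (hwts t ht) (hfsts s hs) (hfsts t ht) hniso
          (hall _ (List.mem_map_of_mem hs) _ (List.mem_map_of_mem ht))
    · exact fs_cIndex_zero D f _
end

section
/- Let f: ℕ → ℝ≥0 satisfy 0 < f(k) < f(k−1) + f(2) for every k ≥ 3. Then for every n ≥ 2 and every tree T with n leaves, 𝔠_{sd,f}(T) ≤ ((f(0)+f(2))/(2√2))·(n−1)(n−2), with equality if and only if T is isomorphic to the comb K_n. Hence 𝔠_{sd,f} attains its maximum on 𝒯*_n exactly at the comb. -/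
namespace MTree

/-! ### auxiliary -/

theorem ind' {P : MTree → Prop} (h : ∀ ts, (∀ t ∈ ts, P t) → P (node ts)) : ∀ T, P T
  | node ts => h ts (fun t ht => have := List.sizeOf_lt_of_mem ht; ind' h t)
decreasing_by simp only [node.sizeOf_spec]; omega

theorem leafCount_node (ts : List MTree) :
    (node ts).leafCount = max 1 (ts.map leafCount).sum := by
  rw [leafCount]; congr 1; exact congrArg List.sum List.attach_map_val

theorem one_le_leafCount (T : MTree) : 1 ≤ T.leafCount := by
  cases T with
  | node ts => rw [leafCount_node]; exact le_max_left _ _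

theorem leafCount_node_of_ne_nil {ts : List MTree} (h : ts ≠ []) :
    (node ts).leafCount = (ts.map leafCount).sum := by
  rw [leafCount_node, max_eq_right]
  have := List.length_le_sum_of_one_le (ts.map leafCount) (by
    intro i hi
    obtain ⟨t, _, rfl⟩ := List.mem_map.mp hi
    exact one_le_leafCount t)
  rw [List.length_map] at this
  have : 1 ≤ ts.length := List.length_pos_iff.mpr h
  omega

theorem length_le_leafCount (ts : List MTree) (h : ts ≠ []) :
    ts.length ≤ (node ts).leafCount := by
  rw [leafCount_node_of_ne_nil h]
  have := List.length_le_sum_of_one_le (ts.map leafCount) (by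
    intro i hi
    obtain ⟨t, _, rfl⟩ := List.mem_map.mp hi
    exact one_le_leafCount t)
  rwa [List.length_map] at this

theorem eq_leaf_of_leafCount_one {T : MTree} (hW : T.WellFormed) (h : T.leafCount = 1) :
    T = node [] := by
  cases T with
  | node ts =>
    cases hW with
    | node hlen _ =>
      rcases eq_or_ne ts [] with rfl | hne
      · rfl
      · exfalso
        have h2 : 2 ≤ ts.length := by
          have : 1 ≤ ts.length := List.length_pos_iff.mpr hne
          omega
        have := length_le_leafCount ts hne
        omega

theorem comb_succ {n : ℕ} (h : 1 ≤ n) : comb (n + 1) = node [node [], comb n] := by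
  cases n with
  | zero => omega
  | succ m => rfl

theorem leafCount_comb {n : ℕ} (h : 1 ≤ n) : (comb n).leafCount = n := by
  induction n with
  | zero => omega
  | succ m ih =>
    rcases Nat.eq_or_lt_of_le h with h1 | h1
    · simp [← h1, comb, leafCount_node]
    · have hm : 1 ≤ m := by omega
      rw [comb_succ hm, leafCount_node_of_ne_nil (by simp)]
      simp [leafCount_node, ih hm]
      omega

theorem deltaF_comb (f : ℕ → ℝ) {n : ℕ} (h : 1 ≤ n) :
    deltaF f (comb n) = n * f 0 + ((n : ℝ) - 1) * f 2 := by
  induction n with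
  | zero => omega
  | succ m ih =>
    rcases Nat.eq_or_lt_of_le h with h1 | h1
    · simp [← h1, comb, deltaF_node]
    · have hm : 1 ≤ m := by omega
      rw [comb_succ hm, deltaF_node]
      simp only [deltaF_node, ih hm, List.map_cons, List.map_nil, List.sum_cons,
        List.sum_nil, List.length_nil, List.length_cons]
      push_cast
      ring



/-! ### Stage 2 -/

theorem sum_map_add' {α : Type*} (l : List α) (F G : α → ℝ) :
    (l.map (fun x => F x + G x)).sum = (l.map F).sum + (l.map G).sum := by
  induction l with
  | nil => simp
  | cons a tl ih => simp [ih]; ring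

theorem sum_map_linear (l : List ℝ) (p q : ℝ) :
    (l.map (fun x => p * x + q)).sum = p * l.sum + q * l.length := by
  induction l with
  | nil => simp
  | cons a tl ih => simp [ih]; push_cast; ring

theorem length_le_sum_real (l : List ℝ) (h : ∀ x ∈ l, 1 ≤ x) :
    (l.length : ℝ) ≤ l.sum := by
  induction l with
  | nil => simp
  | cons a tl ih =>
    have h1 := h a (by simp)
    have h2 := ih (fun x hx => h x (by simp [hx]))
    simp only [List.length_cons, List.sum_cons]
    push_cast
    linarith

theorem exists_max_real (l : List ℝ) (h : l ≠ []) : ∃ N ∈ l, ∀ x ∈ l, x ≤ N := by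
  induction l with
  | nil => exact absurd rfl h
  | cons a tl ih =>
    rcases eq_or_ne tl [] with rfl | hne
    · exact ⟨a, by simp, by simp⟩
    · obtain ⟨N, hNmem, hNmax⟩ := ih hne
      rcases le_total a N with hle | hle
      · refine ⟨N, by simp [hNmem], ?_⟩
        intro x hx
        rcases List.mem_cons.mp hx with rfl | hx
        · exact hle
        · exact hNmax x hx
      · refine ⟨a, by simp, ?_⟩
        intro x hx
        rcases List.mem_cons.mp hx with rfl | hx
        · exact le_rfl
        · exact le_trans (hNmax x hx) hle

/-- `Pr` is the slack quantity of the induction. -/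
noncomputable def Pr (ns : List ℝ) : ℝ :=
  (ns.sum - 1) * (ns.sum - 2) - (ns.map (fun m => (m - 1) * (m - 2))).sum

theorem Pr_cons (m : ℝ) (tl : List ℝ) : Pr (m :: tl) = Pr tl + 2 * (m * tl.sum - 1) := by
  simp only [Pr, List.sum_cons, List.map_cons]
  ring

theorem lemA : ∀ ns : List ℝ, (∀ m ∈ ns, 1 ≤ m) → 2 ≤ ns.length →
    0 ≤ Pr ns ∧ (∀ N ∈ ns, 2 * (N - 1) ≤ Pr ns) ∧
      (3 ≤ ns.length → ∀ N ∈ ns, 2 * (N - 1) < Pr ns) := by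
  intro ns
  induction ns with
  | nil => simp
  | cons m tl ih =>
    intro h1 hlen
    have hm1 : 1 ≤ m := h1 m (by simp)
    have htl1 : ∀ x ∈ tl, 1 ≤ x := fun x hx => h1 x (by simp [hx])
    rcases le_or_gt 2 tl.length with htl | htl
    · -- tail has length ≥ 2
      obtain ⟨hP0, hPle, _⟩ := ih htl1 htl
      have hS : (2 : ℝ) ≤ tl.sum := by
        have := length_le_sum_real tl htl1
        have : (2 : ℝ) ≤ (tl.length : ℝ) := by exact_mod_cast htl
        linarith [length_le_sum_real tl htl1]
      rw [Pr_cons]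
      refine ⟨by nlinarith, ?_, ?_⟩
      · intro N hN
        rcases List.mem_cons.mp hN with rfl | hN
        · nlinarith
        · have := hPle N hN
          nlinarith
      · intro _ N hN
        rcases List.mem_cons.mp hN with rfl | hN
        · nlinarith
        · have := hPle N hN
          nlinarith
    · -- tail has length 1 (length of m::tl is ≥ 2)
      have hl1 : tl.length = 1 := by
        simp only [List.length_cons] at hlen
        omega
      obtain ⟨x, rfl⟩ := List.length_eq_one_iff.mp hl1
      have hx1 : 1 ≤ x := htl1 x (by simp)
      have hPr : Pr [m, x] = 2 * (m * x - 1) := by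
        simp [Pr]; ring
      rw [hPr]
      refine ⟨by nlinarith, ?_, by simp⟩
      intro N hN
      simp only [List.mem_cons, List.mem_singleton, List.not_mem_nil, or_false] at hN
      rcases hN with rfl | rfl
      · nlinarith
      · nlinarith

/-! ### statistics lemmas -/

theorem sqrt_two_pos : (0:ℝ) < Real.sqrt 2 := Real.sqrt_pos.mpr (by norm_num)

theorem ssd_pair (x y : ℝ) : ssd [x, y] = |x - y| / Real.sqrt 2 := by
  have h1 : svar [x, y] = (x - y)^2 / 2 := by
    simp [svar]
    ring
  rw [ssd, h1, Real.sqrt_div (sq_nonneg _) 2, Real.sqrt_sq_eq_abs]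

theorem svar_le_of_bounds {l : List ℝ} (hl : 2 ≤ l.length) {a b : ℝ}
    (h : ∀ x ∈ l, a ≤ x ∧ x ≤ b) : svar l ≤ (b - a)^2 / 2 := by
  have hk2 : (2:ℝ) ≤ (l.length : ℝ) := by exact_mod_cast hl
  have hk0 : (0:ℝ) < (l.length : ℝ) := by linarith
  set k : ℝ := (l.length : ℝ) with hk
  set m : ℝ := l.sum / k with hm
  have hsum : l.sum = m * k := by rw [hm, div_mul_cancel₀ _ hk0.ne']
  have hfun : (fun x : ℝ => (x - m)^2 + (b - x)*(x - a)) = fun x => (a + b - 2*m)*x + (m^2 - a*b) := by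
    funext x; ring
  have hid : (l.map (fun x => (x - m)^2)).sum + (l.map (fun x => (b - x)*(x - a))).sum
      = (a + b - 2*m) * l.sum + (m^2 - a*b) * k := by
    rw [← sum_map_add', hfun, sum_map_linear]
  have hnn : 0 ≤ (l.map (fun x => (b - x)*(x - a))).sum := by
    apply List.sum_nonneg
    intro y hy
    obtain ⟨x, hx, rfl⟩ := List.mem_map.mp hy
    obtain ⟨hxa, hxb⟩ := h x hx
    nlinarith
  -- bounds on m
  have hma : a * k ≤ l.sum := by
    have : (l.map (fun x : ℝ => 0 * x + a)).sum ≤ (l.map (fun x => x)).sum := by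
      apply List.sum_le_sum
      intro x hx
      simpa using (h x hx).1
    rw [sum_map_linear] at this
    simpa [mul_comm] using this
  have hmb : l.sum ≤ b * k := by
    have : (l.map (fun x : ℝ => x)).sum ≤ (l.map (fun x : ℝ => 0 * x + b)).sum := by
      apply List.sum_le_sum
      intro x hx
      simpa using (h x hx).2
    rw [sum_map_linear] at this
    simpa [mul_comm] using this
  have hma' : a ≤ m := by rw [hm]; rw [le_div_iff₀ hk0]; linarith
  have hmb' : m ≤ b := by rw [hm]; rw [div_le_iff₀ hk0]; linarith
  have hQ : (l.map (fun x => (x - m)^2)).sum ≤ k * ((b - m) * (m - a)) := by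
    have : (a + b - 2*m) * l.sum + (m^2 - a*b) * k = k * ((b - m) * (m - a)) := by
      rw [hsum]; ring
    linarith [hid, hnn, this.symm.le]
  have hprod : (b - m) * (m - a) ≤ (b - a)^2 / 4 := by nlinarith [sq_nonneg (b + a - 2*m)]
  have hQ2 : (l.map (fun x => (x - m)^2)).sum ≤ k * ((b - a)^2/4) := by nlinarith
  have hba : 0 ≤ (b - a)^2 := sq_nonneg _
  rw [svar, ← hk, ← hm]
  rw [div_le_iff₀ (by linarith : (0:ℝ) < k - 1)]
  nlinarith

theorem ssd_le_of_bounds {l : List ℝ} (hl : 2 ≤ l.length) {a b : ℝ} (hab : a ≤ b)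
    (h : ∀ x ∈ l, a ≤ x ∧ x ≤ b) : ssd l ≤ (b - a) / Real.sqrt 2 := by
  have h1 := svar_le_of_bounds hl h
  have h2 : ssd l ≤ Real.sqrt ((b-a)^2/2) := Real.sqrt_le_sqrt h1
  refine h2.trans_eq ?_
  rw [show (b-a)^2/2 = ((b-a)/Real.sqrt 2)^2 by
    rw [div_pow, Real.sq_sqrt (by norm_num : (0:ℝ) ≤ 2)]]
  exact Real.sqrt_sq (div_nonneg (by linarith) (Real.sqrt_nonneg 2))



/-! ### Stage 3: iso invariance -/

theorem forall₂_map_eq {β : Type*} (F : MTree → β) :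
    ∀ {as bs : List MTree}, List.Forall₂ Iso as bs →
      (∀ a ∈ as, ∀ {V : MTree}, Iso a V → F a = F V) → as.map F = bs.map F := by
  intro as bs h
  induction h with
  | nil => intro _; rfl
  | @cons a b tas tbs hab htl ih =>
    intro hm
    simp only [List.map_cons]
    rw [hm a (by simp) hab, ih (fun a' ha' => hm a' (by simp [ha']))]

theorem leafCount_iso : ∀ T : MTree, ∀ {U : MTree}, Iso T U → T.leafCount = U.leafCount := by
  apply ind'
  intro ts IH U hIso
  cases hIso with
  | @node _ us vs hF hP =>
    rw [leafCount_node, leafCount_node]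
    rw [forall₂_map_eq leafCount hF (fun a ha => IH a ha),
      (hP.map leafCount).sum_eq]

theorem deltaF_iso (f : ℕ → ℝ) : ∀ T : MTree, ∀ {U : MTree}, Iso T U → deltaF f T = deltaF f U := by
  apply ind'
  intro ts IH U hIso
  cases hIso with
  | @node _ us vs hF hP =>
    rw [deltaF_node, deltaF_node]
    rw [hF.length_eq.trans hP.length_eq,
      forall₂_map_eq (deltaF f) hF (fun a ha => IH a ha),
      (hP.map (deltaF f)).sum_eq]

theorem ssd_perm {l l' : List ℝ} (h : l.Perm l') : ssd l = ssd l' := by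
  have hs : l.sum = l'.sum := h.sum_eq
  have hl : l.length = l'.length := h.length_eq
  unfold ssd svar
  rw [hs, hl, (h.map (fun x => (x - l'.sum / l'.length)^2)).sum_eq]

theorem cIndex_iso (f : ℕ → ℝ) :
    ∀ T : MTree, ∀ {U : MTree}, Iso T U → cIndex ssd f T = cIndex ssd f U := by
  apply ind'
  intro ts IH U hIso
  cases hIso with
  | @node _ us vs hF hP =>
    rw [cIndex_node, cIndex_node]
    have hlen : ts.length = us.length := hF.length_eq.trans hP.length_eq
    have hemp : ts.isEmpty = us.isEmpty := by
      cases ts <;> cases us <;> simp_all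
    rw [hemp, forall₂_map_eq (deltaF f) hF (fun a ha => deltaF_iso f a),
      forall₂_map_eq (cIndex ssd f) hF (fun a ha => IH a ha),
      (hP.map (cIndex ssd f)).sum_eq]
    congr 1
    by_cases h : us.isEmpty
    · simp [h]
    · simp only [h, if_false]
      exact ssd_perm (hP.map (deltaF f))

/-! ### f and deltaF bounds -/

section Bounds

variable {f : ℕ → ℝ}

theorem f_le_of_hf (hf : ∀ k, 3 ≤ k → 0 < f k ∧ f k < f (k - 1) + f 2) :
    ∀ k, 2 ≤ k → f k ≤ ((k : ℝ) - 1) * f 2 := by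
  intro k
  induction k with
  | zero => omega
  | succ m ih =>
    intro h
    rcases Nat.lt_or_ge m 2 with h2 | h2
    · have hm : m = 1 := by omega
      subst hm
      norm_num
    · have h3 : 3 ≤ m + 1 := by omega
      have hstep := (hf (m + 1) h3).2
      have hih := ih h2
      have hsub : m + 1 - 1 = m := rfl
      rw [hsub] at hstep
      have hm2 : (2 : ℝ) ≤ (m : ℝ) := by exact_mod_cast h2
      push_cast
      linarith

theorem sum_map_affine (ts : List MTree) (p q : ℝ) :
    (ts.map (fun t => p * (t.leafCount : ℝ) + q)).sum
      = p * (((ts.map leafCount).sum : ℕ) : ℝ) + q * ts.length := by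
  induction ts with
  | nil => simp
  | cons a tl ih =>
    simp only [List.map_cons, List.sum_cons, ih, List.length_cons]
    push_cast
    ring

theorem deltaF_ge (hf0 : ∀ n, 0 ≤ f n) :
    ∀ T : MTree, (T.leafCount : ℝ) * f 0 ≤ deltaF f T := by
  apply ind'
  intro ts IH
  rcases eq_or_ne ts [] with rfl | hne
  · simp [leafCount_node, deltaF_node]
  · rw [leafCount_node_of_ne_nil hne, deltaF_node]
    have h1 : (ts.map (fun t => f 0 * (t.leafCount : ℝ) + 0)).sum ≤ (ts.map (deltaF f)).sum := by
      apply List.sum_le_sum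
      intro t ht
      simpa [mul_comm] using IH t ht
    rw [sum_map_affine] at h1
    have := hf0 ts.length
    linarith [h1, this]

theorem deltaF_le (hf0 : ∀ n, 0 ≤ f n)
    (hf : ∀ k, 3 ≤ k → 0 < f k ∧ f k < f (k - 1) + f 2) :
    ∀ T : MTree, T.WellFormed →
      deltaF f T ≤ (T.leafCount : ℝ) * f 0 + ((T.leafCount : ℝ) - 1) * f 2 := by
  apply ind'
  intro ts IH hW
  cases hW with
  | node hlen hWc =>
    rcases eq_or_ne ts [] with rfl | hne
    · simp [leafCount_node, deltaF_node]
    · have hk2 : 2 ≤ ts.length := by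
        have : 1 ≤ ts.length := List.length_pos_iff.mpr hne
        omega
      rw [leafCount_node_of_ne_nil hne, deltaF_node]
      have hfk : f ts.length ≤ ((ts.length : ℝ) - 1) * f 2 := f_le_of_hf hf ts.length hk2
      have h1 : (ts.map (deltaF f)).sum
          ≤ (ts.map (fun t => (f 0 + f 2) * (t.leafCount : ℝ) + (-(f 2)))).sum := by
        apply List.sum_le_sum
        intro t ht
        have := IH t ht (hWc t ht)
        have h2 := this
        nlinarith [h2]
      rw [sum_map_affine] at h1
      have hS : (ts.length : ℝ) ≤ (((ts.map leafCount).sum : ℕ) : ℝ) := by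
        have := List.length_le_sum_of_one_le (ts.map leafCount) (by
          intro i hi
          obtain ⟨t, _, rfl⟩ := List.mem_map.mp hi
          exact one_le_leafCount t)
        rw [List.length_map] at this
        exact_mod_cast this
      nlinarith [h1, hfk, hS]

end Bounds

/-! ### gB arithmetic -/

noncomputable def gB (f : ℕ → ℝ) (n : ℕ) : ℝ :=
  (f 0 + f 2) / (2 * Real.sqrt 2) * ((n : ℝ) - 1) * ((n : ℝ) - 2)

theorem gB_one (f : ℕ → ℝ) : gB f 1 = 0 := by simp [gB]

theorem gB_add (f : ℕ → ℝ) (p q : ℕ) :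
    gB f (p + q) = ((p : ℝ) * q - 1) * (f 0 + f 2) / Real.sqrt 2 + gB f p + gB f q := by
  have hs := sqrt_two_pos.ne'
  unfold gB
  push_cast
  field_simp
  ring

theorem cIndex_comb (f : ℕ → ℝ) (hf0 : ∀ n, 0 ≤ f n) {n : ℕ} (h : 1 ≤ n) :
    cIndex ssd f (comb n) = gB f n := by
  induction n with
  | zero => omega
  | succ m ih =>
    rcases Nat.eq_or_lt_of_le h with h1 | h1
    · rw [← h1]
      simp [comb, cIndex_node, gB]
    · have hm : 1 ≤ m := by omega
      have hm' : (1 : ℝ) ≤ (m : ℝ) := by exact_mod_cast hm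
      rw [comb_succ hm, cIndex_node]
      have hδ0 : deltaF f (node []) = f 0 := by simp [deltaF_node]
      have hc0 : cIndex ssd f (node []) = 0 := by simp [cIndex_node]
      have hδc := deltaF_comb f hm
      simp only [List.isEmpty_cons, List.map_cons, List.map_nil, List.sum_cons, List.sum_nil,
        hδ0, hc0, hδc, ih hm, if_false, Bool.false_eq_true]
      rw [ssd_pair]
      have habs : |f 0 - ((m : ℝ) * f 0 + ((m : ℝ) - 1) * f 2)| = ((m:ℝ) - 1) * (f 0 + f 2) := by
        rw [abs_of_nonpos (by nlinarith [hf0 0, hf0 2])]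
        ring
      rw [habs]
      have hgs : gB f (m + 1) = ((m : ℝ) * 1 - 1) * (f 0 + f 2) / Real.sqrt 2 + gB f m + gB f 1 := by
        exact_mod_cast gB_add f m 1
      rw [hgs, gB_one]
      ring



/-! ### main induction -/

theorem sum_map_gB (f : ℕ → ℝ) (l : List MTree) :
    (l.map (fun t => gB f t.leafCount)).sum
      = (f 0 + f 2) / (2 * Real.sqrt 2)
          * (l.map (fun t => ((t.leafCount : ℝ) - 1) * ((t.leafCount : ℝ) - 2))).sum := by
  induction l with
  | nil => simp
  | cons a tl ih =>
    simp only [List.map_cons, List.sum_cons, ih]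
    unfold gB
    ring

theorem main_aux (f : ℕ → ℝ) (hf0 : ∀ n, 0 ≤ f n)
    (hf : ∀ k, 3 ≤ k → 0 < f k ∧ f k < f (k - 1) + f 2) :
    ∀ T : MTree, T.WellFormed →
      cIndex ssd f T ≤ gB f T.leafCount ∧
        (cIndex ssd f T = gB f T.leafCount → Iso T (comb T.leafCount)) := by
  have hs2 : (0:ℝ) < Real.sqrt 2 := sqrt_two_pos
  have hf2 : 0 < f 2 := by
    obtain ⟨h1, h2⟩ := hf 3 le_rfl
    norm_num at h2
    linarith
  have hf02 : 0 < f 0 + f 2 := by have := hf0 0; linarith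
  have hCpos : 0 < (f 0 + f 2) / (2 * Real.sqrt 2) := by
    apply div_pos hf02
    linarith
  apply ind'
  intro ts IH hW
  rcases ts with _ | ⟨a, _ | ⟨b, _ | ⟨c, rest⟩⟩⟩
  · -- ts = []
    have hL : (node ([] : List MTree)).leafCount = 1 := by rw [leafCount_node]; simp
    have hc : cIndex ssd f (node []) = 0 := by rw [cIndex_node]; simp
    rw [hL, hc, gB_one]
    have hcomb : comb 1 = node [] := rfl
    rw [hcomb]
    exact ⟨le_rfl, fun _ => Iso.node List.Forall₂.nil (List.Perm.refl [])⟩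
  · -- ts = [a] : impossible
    cases hW with
    | node hlen hWc => exact absurd rfl hlen
  · -- ts = [a, b]
    cases hW with
    | node hlen hWc =>
    have hWa : a.WellFormed := hWc a (by simp)
    have hWb : b.WellFormed := hWc b (by simp)
    obtain ⟨IHa1, IHa2⟩ := IH a (by simp) hWa
    obtain ⟨IHb1, IHb2⟩ := IH b (by simp) hWb
    have hp1 : 1 ≤ a.leafCount := one_le_leafCount a
    have hq1 : 1 ≤ b.leafCount := one_le_leafCount b
    have hp1' : (1:ℝ) ≤ (a.leafCount : ℝ) := by exact_mod_cast hp1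
    have hq1' : (1:ℝ) ≤ (b.leafCount : ℝ) := by exact_mod_cast hq1
    have hLT : (node [a, b]).leafCount = a.leafCount + b.leafCount := by
      rw [leafCount_node_of_ne_nil (by simp)]; simp
    have hcT : cIndex ssd f (node [a, b])
        = |deltaF f a - deltaF f b| / Real.sqrt 2 + (cIndex ssd f a + cIndex ssd f b) := by
      rw [cIndex_node]
      simp [ssd_pair]
    have hda1 := deltaF_ge hf0 a
    have hdb1 := deltaF_ge hf0 b
    have hda2 := deltaF_le hf0 hf a hWa
    have hdb2 := deltaF_le hf0 hf b hWb
    rw [hLT, hcT]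
    rcases eq_or_lt_of_le hq1 with hq | hq2
    · -- b is a leaf
      obtain rfl : b = node [] := eq_leaf_of_leafCount_one hWb hq.symm
      have hδb : deltaF f (node []) = f 0 := by rw [deltaF_node]; simp
      have hcb : cIndex ssd f (node []) = 0 := by rw [cIndex_node]; simp
      have hLb : (node [] : MTree).leafCount = 1 := by rw [leafCount_node]; simp
      rw [hδb, hcb, hLb]
      have habs : |deltaF f a - f 0| = deltaF f a - f 0 :=
        abs_of_nonneg (by nlinarith [hf0 0])
      have hkey : deltaF f a - f 0 ≤ ((a.leafCount:ℝ) - 1) * (f 0 + f 2) := by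
        nlinarith [hf0 0]
      have hgs : gB f (a.leafCount + 1)
          = ((a.leafCount:ℝ) - 1) * (f 0 + f 2) / Real.sqrt 2 + gB f a.leafCount := by
        have h := gB_add f a.leafCount 1
        rw [gB_one] at h
        push_cast at h ⊢
        rw [h]
        ring_nf
      rw [habs, hgs]
      have hdiv : (deltaF f a - f 0) / Real.sqrt 2
          ≤ ((a.leafCount:ℝ) - 1) * (f 0 + f 2) / Real.sqrt 2 := by gcongr
      constructor
      · linarith [IHa1]
      · intro heq
        have e1 : cIndex ssd f a = gB f a.leafCount := by linarith [IHa1]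
        have hiso := IHa2 e1
        rw [comb_succ hp1]
        exact Iso.node
          (List.Forall₂.cons hiso
            (List.Forall₂.cons (Iso.node List.Forall₂.nil (List.Perm.refl []))
              List.Forall₂.nil))
          (List.Perm.swap (node []) (comb a.leafCount) [])
    rcases eq_or_lt_of_le hp1 with hp | hp2
    · -- a is a leaf, b is not
      obtain rfl : a = node [] := eq_leaf_of_leafCount_one hWa hp.symm
      have hδa : deltaF f (node []) = f 0 := by rw [deltaF_node]; simp
      have hca : cIndex ssd f (node []) = 0 := by rw [cIndex_node]; simp
      have hLa : (node [] : MTree).leafCount = 1 := by rw [leafCount_node]; simp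
      rw [hδa, hca, hLa]
      have habs : |f 0 - deltaF f b| = deltaF f b - f 0 := by
        rw [abs_sub_comm]
        exact abs_of_nonneg (by nlinarith [hf0 0])
      have hkey : deltaF f b - f 0 ≤ ((b.leafCount:ℝ) - 1) * (f 0 + f 2) := by
        nlinarith [hf0 0]
      have hgs : gB f (1 + b.leafCount)
          = ((b.leafCount:ℝ) - 1) * (f 0 + f 2) / Real.sqrt 2 + gB f b.leafCount := by
        have h := gB_add f 1 b.leafCount
        rw [gB_one] at h
        push_cast at h ⊢
        rw [h]
        ring_nf
      rw [habs, hgs]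
      have hdiv : (deltaF f b - f 0) / Real.sqrt 2
          ≤ ((b.leafCount:ℝ) - 1) * (f 0 + f 2) / Real.sqrt 2 := by gcongr
      constructor
      · linarith [IHb1]
      · intro heq
        have e1 : cIndex ssd f b = gB f b.leafCount := by linarith [IHb1]
        have hiso := IHb2 e1
        have h1q : 1 + b.leafCount = b.leafCount + 1 := Nat.add_comm _ _
        rw [h1q, comb_succ hq1]
        exact Iso.node
          (List.Forall₂.cons (Iso.node List.Forall₂.nil (List.Perm.refl []))
            (List.Forall₂.cons hiso List.Forall₂.nil))
          (List.Perm.refl [node [], comb b.leafCount])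
    · -- both children have ≥ 2 leaves: strict inequality
      have hp2' : (2:ℝ) ≤ (a.leafCount : ℝ) := by exact_mod_cast hp2
      have hq2' : (2:ℝ) ≤ (b.leafCount : ℝ) := by exact_mod_cast hq2
      have hA1 : (0:ℝ) ≤ ((a.leafCount:ℝ) + 1) * ((b.leafCount:ℝ) - 1) * f 0 :=
        mul_nonneg (mul_nonneg (by linarith) (by linarith)) (hf0 0)
      have hB1 : (0:ℝ) < (a.leafCount:ℝ) * ((b.leafCount:ℝ) - 1) * f 2 :=
        mul_pos (mul_pos (by linarith) (by linarith)) hf2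
      have hA2 : (0:ℝ) ≤ ((b.leafCount:ℝ) + 1) * ((a.leafCount:ℝ) - 1) * f 0 :=
        mul_nonneg (mul_nonneg (by linarith) (by linarith)) (hf0 0)
      have hB2 : (0:ℝ) < (b.leafCount:ℝ) * ((a.leafCount:ℝ) - 1) * f 2 :=
        mul_pos (mul_pos (by linarith) (by linarith)) hf2
      have hstrict : |deltaF f a - deltaF f b|
          < ((a.leafCount:ℝ) * (b.leafCount:ℝ) - 1) * (f 0 + f 2) := by
        rw [abs_sub_lt_iff]
        constructor
        · linarith only [hda2, hdb1, hA1, hB1]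
        · linarith only [hdb2, hda1, hA2, hB2]
      have hgs := gB_add f a.leafCount b.leafCount
      have hdiv : |deltaF f a - deltaF f b| / Real.sqrt 2
          < ((a.leafCount:ℝ) * (b.leafCount:ℝ) - 1) * (f 0 + f 2) / Real.sqrt 2 := by gcongr
      constructor
      · rw [hgs]; linarith [IHa1, IHb1]
      · intro heq
        rw [hgs] at heq
        exact absurd heq (ne_of_lt (by linarith only [IHa1, IHb1, hdiv, heq]))
  · -- at least three children
    cases hW with
    | node hlen hWc =>
    set l : List MTree := a :: b :: c :: rest with hl
    have hne : l ≠ [] := by simp [hl]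
    have hk3 : 3 ≤ l.length := by simp [hl]
    have hLT : (node l).leafCount = (l.map leafCount).sum := leafCount_node_of_ne_nil hne
    have hcT : cIndex ssd f (node l)
        = ssd (l.map (deltaF f)) + (l.map (cIndex ssd f)).sum := by
      rw [cIndex_node]
      simp [hl]
    set ns : List ℝ := l.map (fun t => (t.leafCount : ℝ)) with hns
    have hns1 : ∀ m ∈ ns, 1 ≤ m := by
      intro m hm
      obtain ⟨t, _, rfl⟩ := List.mem_map.mp hm
      exact_mod_cast one_le_leafCount t
    have hnslen : ns.length = l.length := List.length_map _
    obtain ⟨N, hNmem, hNmax⟩ := exists_max_real ns (by simp [hns, hl])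
    have hN1 : (1:ℝ) ≤ N := hns1 N hNmem
    have hA := (lemA ns hns1 (by omega)).2.2 (by omega) N hNmem
    have hsum : ns.sum = (((node l).leafCount : ℕ) : ℝ) := by
      rw [hLT, Nat.cast_list_sum, hns, List.map_map]
      rfl
    have hssd : ssd (l.map (deltaF f)) ≤ ((N * f 0 + (N - 1) * f 2) - f 0) / Real.sqrt 2 := by
      apply ssd_le_of_bounds
      · rw [List.length_map]; omega
      · nlinarith [hf0 0, hf2.le]
      · intro x hx
        obtain ⟨t, ht, rfl⟩ := List.mem_map.mp hx
        have hmem : ((t.leafCount : ℝ)) ∈ ns := by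
          rw [hns]; exact List.mem_map_of_mem ht
        have htN := hNmax _ hmem
        have ht1 : (1:ℝ) ≤ (t.leafCount:ℝ) := hns1 _ hmem
        constructor
        · have := deltaF_ge hf0 t
          nlinarith [hf0 0]
        · have := deltaF_le hf0 hf t (hWc t ht)
          nlinarith [hf0 0, hf2.le]
    have hsumc : (l.map (cIndex ssd f)).sum ≤ (l.map (fun t => gB f t.leafCount)).sum := by
      apply List.sum_le_sum
      intro t ht
      exact (IH t ht (hWc t ht)).1
    have hmm : ns.map (fun m => (m - 1) * (m - 2))
        = l.map (fun t => ((t.leafCount : ℝ) - 1) * ((t.leafCount : ℝ) - 2)) := by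
      rw [hns, List.map_map]
      rfl
    have hgsum := sum_map_gB f l
    rw [← hmm] at hgsum
    have hPr : gB f ((node l).leafCount)
        = (f 0 + f 2) / (2 * Real.sqrt 2) * Pr ns
          + (f 0 + f 2) / (2 * Real.sqrt 2) * (ns.map (fun m => (m - 1) * (m - 2))).sum := by
      rw [gB, Pr, hsum]
      ring
    have hkey : ((N * f 0 + (N - 1) * f 2) - f 0) / Real.sqrt 2
        < (f 0 + f 2) / (2 * Real.sqrt 2) * Pr ns := by
      have h1 : ((N * f 0 + (N - 1) * f 2) - f 0) / Real.sqrt 2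
          = (f 0 + f 2) / (2 * Real.sqrt 2) * (2 * (N - 1)) := by
        field_simp
        ring
      rw [h1]
      exact mul_lt_mul_of_pos_left hA hCpos
    have hfinal : cIndex ssd f (node l) < gB f ((node l).leafCount) := by
      rw [hcT, hPr]
      linarith [hssd, hsumc, hgsum ▸ hsumc, hkey]
    exact ⟨hfinal.le, fun heq => absurd heq hfinal.ne⟩

end MTree

/-- Theorem 18 for `D = sd`: if `0 < f k < f (k-1) + f 2` for all `k ≥ 3`, then on
trees with `n ≥ 2` leaves the index `𝔠_{sd,f}` is at most
`(f 0 + f 2)/(2√2) · (n-1)(n-2)`, with equality exactly at the comb `K_n`. -/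
theorem cIndex_sd_le_comb (f : ℕ → ℝ) (hf0 : ∀ n, 0 ≤ f n)
    (hf : ∀ k, 3 ≤ k → 0 < f k ∧ f k < f (k - 1) + f 2)
    (n : ℕ) (hn : 2 ≤ n) (T : MTree) (hT : T.WellFormed) (hTn : T.leafCount = n) :
    MTree.cIndex MTree.ssd f T ≤
      (f 0 + f 2) / (2 * Real.sqrt 2) * ((n : ℝ) - 1) * ((n : ℝ) - 2) ∧
    (MTree.cIndex MTree.ssd f T =
        (f 0 + f 2) / (2 * Real.sqrt 2) * ((n : ℝ) - 1) * ((n : ℝ) - 2) ↔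
      T.Iso (MTree.comb n)) := by
  obtain ⟨h1, h2⟩ := MTree.main_aux f hf0 hf T hT
  rw [hTn] at h1 h2
  have hg : MTree.gB f n = (f 0 + f 2) / (2 * Real.sqrt 2) * ((n : ℝ) - 1) * ((n : ℝ) - 2) := rfl
  rw [hg] at h1 h2
  refine ⟨h1, h2, fun hiso => ?_⟩
  rw [MTree.cIndex_iso f T hiso, MTree.cIndex_comb f hf0 (by omega : 1 ≤ n)]
  exact hg
end
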